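/- Cubic majorant lemma: for every real t > 0, 2t² log t ≤ P₃(t), where P₃(t) := 2(t − 1) + 3(t − 1)² + (2/3)(t − 1)³. -/

import Mathlib

noncomputable def gfun : ℝ → ℝ :=
  fun t => 2 * (t - 1) + 3 * (t - 1) ^ 2 + 2 / 3 * (t - 1) ^ 3 - 2 * t ^ 2 * Real.log t

noncomputable def hfun : ℝ → ℝ :=
  fun t => 2 + 6 * (t - 1) + 2 * (t - 1) ^ 2 - (4 * t * Real.log t + 2 * t)

lemma hasDerivAt_gfun (x : ℝ) (hx : 0 < x) : HasDerivAt gfun (hfun x) x := by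
  have hlog : HasDerivAt Real.log x⁻¹ x := Real.hasDerivAt_log (ne_of_gt hx)
  have h1 : HasDerivAt (fun t : ℝ => 2 * (t - 1) + 3 * (t - 1) ^ 2 + 2 / 3 * (t - 1) ^ 3)
      (2 + 6 * (x - 1) + 2 * (x - 1) ^ 2) x := by
    have := ((hasDerivAt_id x).sub_const 1)
    have h2 := (((hasDerivAt_id x).sub_const 1).pow 2)
    have h3 := (((hasDerivAt_id x).sub_const 1).pow 3)
    have := ((this.const_mul 2).add (h2.const_mul 3)).add (h3.const_mul (2/3 : ℝ))
    refine this.congr_deriv ?_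
    simp only [id_eq]
    ring
  have h2 : HasDerivAt (fun t : ℝ => 2 * t ^ 2 * Real.log t)
      (4 * x * Real.log x + 2 * x) x := by
    have hp : HasDerivAt (fun t : ℝ => 2 * t ^ 2) (4 * x) x := by
      have := ((hasDerivAt_pow 2 x).const_mul (2 : ℝ))
      refine this.congr_deriv ?_; ring
    have := hp.mul hlog
    refine this.congr_deriv ?_
    field_simp
  have := h1.sub h2
  exact this

lemma hasDerivAt_hfun (x : ℝ) (hx : 0 < x) :
    HasDerivAt hfun (4 * (x - 1) - 4 * Real.log x) x := by
  have hlog : HasDerivAt Real.log x⁻¹ x := Real.hasDerivAt_log (ne_of_gt hx)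
  have h1 : HasDerivAt (fun t : ℝ => 2 + 6 * (t - 1) + 2 * (t - 1) ^ 2)
      (6 + 4 * (x - 1)) x := by
    have h2 := (((hasDerivAt_id x).sub_const 1).pow 2)
    have := (((hasDerivAt_id x).sub_const 1).const_mul 6).add (h2.const_mul (2:ℝ))
    have := this.const_add 2
    rw [show (fun t : ℝ => 2 + 6 * (t - 1) + 2 * (t - 1) ^ 2) =
      fun t => 2 + (6 * (t - 1) + 2 * (t - 1) ^ 2) from funext fun t => add_assoc _ _ _]
    refine this.congr_deriv ?_; simp [id_eq]; ring
  have h2 : HasDerivAt (fun t : ℝ => 4 * t * Real.log t + 2 * t)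
      (4 * Real.log x + 4 + 2) x := by
    have hp : HasDerivAt (fun t : ℝ => 4 * t) (4 : ℝ) x := by
      simpa using (hasDerivAt_id x).const_mul (4:ℝ)
    have := (hp.mul hlog).add ((hasDerivAt_id x).const_mul (2:ℝ))
    refine this.congr_deriv ?_
    field_simp
  have := h1.sub h2
  refine this.congr_deriv ?_
  ring

lemma hfun_one : hfun 1 = 0 := by simp [hfun]

lemma gfun_one : gfun 1 = 0 := by simp [gfun]

lemma hfun_deriv_nonneg (x : ℝ) (hx : 0 < x) : 0 ≤ 4 * (x - 1) - 4 * Real.log x := by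
  have := Real.log_le_sub_one_of_pos hx
  nlinarith

lemma hfun_mono : MonotoneOn hfun (Set.Ioi 0) := by
  apply monotoneOn_of_deriv_nonneg (convex_Ioi 0)
  · exact fun x hx => (hasDerivAt_hfun x hx).continuousAt.continuousWithinAt
  · intro x hx
    rw [interior_Ioi] at hx
    exact (hasDerivAt_hfun x hx).differentiableAt.differentiableWithinAt
  · intro x hx
    rw [interior_Ioi] at hx
    rw [(hasDerivAt_hfun x hx).deriv]
    exact hfun_deriv_nonneg x hx

lemma gfun_nonneg (t : ℝ) (ht : 0 < t) : 0 ≤ gfun t := by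
  rcases le_or_gt 1 t with h1 | h1
  · -- g monotone on [1, ∞)
    have hmono : MonotoneOn gfun (Set.Ici 1) := by
      apply monotoneOn_of_deriv_nonneg (convex_Ici 1)
      · exact fun x hx =>
          (hasDerivAt_gfun x (lt_of_lt_of_le one_pos hx)).continuousAt.continuousWithinAt
      · intro x hx
        rw [interior_Ici] at hx
        exact (hasDerivAt_gfun x (lt_trans one_pos hx)).differentiableAt.differentiableWithinAt
      · intro x hx
        rw [interior_Ici] at hx
        rw [(hasDerivAt_gfun x (lt_trans one_pos hx)).deriv]
        have := hfun_mono (Set.mem_Ioi.mpr one_pos) (Set.mem_Ioi.mpr (lt_trans one_pos hx))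
          (le_of_lt hx)
        rw [hfun_one] at this
        exact this
    have := hmono (Set.self_mem_Ici) (Set.mem_Ici.mpr h1) h1
    rwa [gfun_one] at this
  · -- g antitone on (0, 1]
    have hanti : AntitoneOn gfun (Set.Ioc 0 1) := by
      apply antitoneOn_of_deriv_nonpos (convex_Ioc 0 1)
      · exact fun x hx => (hasDerivAt_gfun x hx.1).continuousAt.continuousWithinAt
      · intro x hx
        rw [interior_Ioc] at hx
        exact (hasDerivAt_gfun x hx.1).differentiableAt.differentiableWithinAt
      · intro x hx
        rw [interior_Ioc] at hx
        rw [(hasDerivAt_gfun x hx.1).deriv]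
        have := hfun_mono (Set.mem_Ioi.mpr hx.1) (Set.mem_Ioi.mpr one_pos) (le_of_lt hx.2)
        rw [hfun_one] at this
        exact this
    have := hanti (Set.mem_Ioc.mpr ⟨ht, le_of_lt h1⟩)
      (Set.mem_Ioc.mpr ⟨one_pos, le_refl 1⟩) (le_of_lt h1)
    rwa [gfun_one] at this

/-- Cubic majorant lemma: for every real `t > 0`,
`2t² log t ≤ P₃(t) = 2(t-1) + 3(t-1)² + (2/3)(t-1)³`. -/
theorem cubic_majorant (t : ℝ) (ht : 0 < t) :
    2 * t ^ 2 * Real.log t ≤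
      2 * (t - 1) + 3 * (t - 1) ^ 2 + 2 / 3 * (t - 1) ^ 3 := by
  have := gfun_nonneg t ht
  unfold gfun at this
  linarith
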